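/- For every finite, unweighted, connected graph G on n vertices, the second smallest eigenvalue of the normalized Laplacian satisfies λ₂ ≥ 2/(n(n−1)²). -/

import Mathlib

open Finset Matrix

/-- The normalized Laplacian `I - D^{-1/2} A D^{-1/2}` of a finite simple graph. -/
noncomputable def normLapG {n : ℕ} (G : SimpleGraph (Fin n)) [DecidableRel G.Adj] :
    Matrix (Fin n) (Fin n) ℝ :=
  Matrix.of fun x y =>
    (if x = y then (1 : ℝ) else 0) -
      (if G.Adj x y then (1 : ℝ) else 0) /
        (Real.sqrt (G.degree x) * Real.sqrt (G.degree y))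

namespace SGaux

variable {n : ℕ} {G : SimpleGraph (Fin n)} [DecidableRel G.Adj]

/-- Sum over darts equals double sum over adjacent pairs. -/
lemma dart_sum (h : Fin n → Fin n → ℝ) :
    ∑ d : G.Dart, h d.toProd.1 d.toProd.2
      = ∑ x : Fin n, ∑ y : Fin n, if G.Adj x y then h x y else 0 := by
  classical
  rw [← Fintype.sum_equiv
    (show {p : Fin n × Fin n // G.Adj p.1 p.2} ≃ G.Dart from
      { toFun := fun p => ⟨p.1, p.2⟩
        invFun := fun d => ⟨d.toProd, d.adj⟩
        left_inv := fun p => rfl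
        right_inv := fun d => rfl })
    (fun p : {p : Fin n × Fin n // G.Adj p.1 p.2} => h p.1.1 p.1.2)
    (fun d : G.Dart => h d.toProd.1 d.toProd.2) (fun p => rfl)]
  rw [← Finset.sum_subtype (Finset.univ.filter (fun p : Fin n × Fin n => G.Adj p.1 p.2))
      (fun p => by simp) (fun p : Fin n × Fin n => h p.1 p.2)]
  rw [Finset.sum_filter]
  exact Fintype.sum_prod_type _

lemma row_sum (x : Fin n) (c : ℝ) :
    ∑ y : Fin n, (if G.Adj x y then c else 0) = G.degree x * c := by
  rw [← Finset.sum_filter]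
  rw [Finset.sum_const]
  rw [← SimpleGraph.neighborFinset_eq_filter, SimpleGraph.card_neighborFinset_eq_degree]
  simp [nsmul_eq_mul]

lemma telescope (g : Fin n → ℝ) {x y : Fin n} (p : G.Walk x y) :
    ((p.darts.map (fun d => g d.toProd.1 - g d.toProd.2)).sum) = g x - g y := by
  induction p with
  | nil => simp
  | cons h q ih =>
      simp only [SimpleGraph.Walk.darts_cons, List.map_cons, List.sum_cons, ih]
      ring

lemma symm_sum (h : G.Dart → ℝ) : ∑ d : G.Dart, h d.symm = ∑ d : G.Dart, h d := by
  exact Equiv.sum_comp (Function.Involutive.toPerm _ SimpleGraph.Dart.symm_involutive) h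


lemma path_bound (hn : 2 ≤ n) (hconn : G.Connected) (g : Fin n → ℝ) (x y : Fin n) :
    (g x - g y)^2 ≤ (((n:ℝ)-1) / 2) * ∑ d : G.Dart, (g d.toProd.1 - g d.toProd.2)^2 := by
  classical
  set S := ∑ d : G.Dart, (g d.toProd.1 - g d.toProd.2)^2 with hS
  have hS0 : 0 ≤ S := Finset.sum_nonneg fun d _ => sq_nonneg _
  have hn1 : (0:ℝ) ≤ (n:ℝ) - 1 := by
    have : (1:ℝ) ≤ (n:ℝ) := by exact_mod_cast le_trans (by norm_num) hn
    linarith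
  rcases eq_or_ne x y with rfl | hxy
  · simp only [sub_self, ne_eq, zero_pow, OfNat.ofNat_ne_zero, not_false_eq_true]
    positivity
  obtain ⟨w⟩ := hconn.preconnected x y
  set p := w.toPath with hp
  have hpath : (p : G.Walk x y).IsPath := p.2
  have hnodup : (p : G.Walk x y).darts.Nodup :=
    SimpleGraph.Walk.darts_nodup_of_support_nodup hpath.support_nodup
  set t : Finset G.Dart := (p : G.Walk x y).darts.toFinset with ht
  have htele : g x - g y = ∑ d ∈ t, (g d.toProd.1 - g d.toProd.2) := by
    rw [ht, List.sum_toFinset _ hnodup, telescope g (p : G.Walk x y)]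
  have hcard : (t.card : ℝ) ≤ (n:ℝ) - 1 := by
    have h1 : t.card = (p : G.Walk x y).length := by
      rw [ht, List.toFinset_card_of_nodup hnodup, SimpleGraph.Walk.length_darts]
    have h2 : (p : G.Walk x y).length < n := by
      simpa [Fintype.card_fin] using hpath.length_lt
    rw [h1]
    have : ((p : G.Walk x y).length : ℝ) ≤ (n:ℝ) - 1 := by
      have := Nat.lt_iff_add_one_le.mp h2
      have : ((p : G.Walk x y).length + 1 : ℝ) ≤ n := by exact_mod_cast this
      linarith
    exact this
  -- the doubled sum bound
  have hdouble : ∑ d ∈ t, (g d.toProd.1 - g d.toProd.2)^2 ≤ S / 2 := by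
    have hinj : Set.InjOn SimpleGraph.Dart.symm (t : Set G.Dart) :=
      fun a _ b _ hab => SimpleGraph.Dart.symm_involutive.injective hab
    have himg : ∑ d ∈ t.image SimpleGraph.Dart.symm, (g d.toProd.1 - g d.toProd.2)^2
        = ∑ d ∈ t, (g d.toProd.1 - g d.toProd.2)^2 := by
      rw [Finset.sum_image (fun a ha b hb hab => hinj ha hb hab)]
      refine Finset.sum_congr rfl fun d _ => ?_
      simp only [SimpleGraph.Dart.symm_toProd, Prod.fst_swap, Prod.snd_swap]
      ring
    have hdisj : Disjoint t (t.image SimpleGraph.Dart.symm) := by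
      rw [Finset.disjoint_left]
      rintro d hd hd'
      obtain ⟨e, he, rfl⟩ := Finset.mem_image.mp hd'
      have hde : e.symm ≠ e := by
        intro h
        have := congrArg (fun d : G.Dart => d.toProd.1) h
        simpa using (e.fst_ne_snd).symm (by simpa [SimpleGraph.Dart.symm_toProd] using this)
      have hedge : e.symm.edge = e.edge := SimpleGraph.Dart.edge_symm e
      have hmemd : e.symm ∈ (p : G.Walk x y).darts := List.mem_toFinset.mp hd
      have hmeme : e ∈ (p : G.Walk x y).darts := List.mem_toFinset.mp he
      have hedges : (p : G.Walk x y).edges.Nodup := hpath.isTrail.edges_nodup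
      have : e.symm = e := by
        exact List.inj_on_of_nodup_map
          (by rw [← SimpleGraph.Walk.edges]; exact hedges) hmemd hmeme hedge
      exact hde this
    have hsub : t ∪ t.image SimpleGraph.Dart.symm ⊆ Finset.univ := Finset.subset_univ _
    have hle : ∑ d ∈ t ∪ t.image SimpleGraph.Dart.symm, (g d.toProd.1 - g d.toProd.2)^2 ≤ S :=
      Finset.sum_le_sum_of_subset_of_nonneg hsub (fun d _ _ => sq_nonneg _)
    rw [Finset.sum_union hdisj, himg] at hle
    linarith
  calc (g x - g y)^2 = (∑ d ∈ t, (g d.toProd.1 - g d.toProd.2))^2 := by rw [htele]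
    _ ≤ t.card * ∑ d ∈ t, (g d.toProd.1 - g d.toProd.2)^2 := by
        exact_mod_cast sq_sum_le_card_mul_sum_sq
          (s := t) (f := fun d => (g d.toProd.1 - g d.toProd.2))
    _ ≤ ((n:ℝ)-1) * (S/2) := by
        apply mul_le_mul hcard hdouble (Finset.sum_nonneg fun d _ => sq_nonneg _) hn1
    _ = (((n:ℝ)-1)/2) * S := by ring


lemma rayleigh (hn : 2 ≤ n) (hconn : G.Connected) (f : Fin n → ℝ)
    (hortho : ∑ x : Fin n, Real.sqrt (G.degree x) * f x = 0) :
    2 / ((n:ℝ) * ((n:ℝ)-1)^2) * (∑ x : Fin n, f x ^ 2)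
      ≤ f ⬝ᵥ (normLapG G *ᵥ f) := by
  classical
  have hd : ∀ x, 0 < G.degree x := by
    intro x
    rw [SimpleGraph.degree_pos_iff_exists_adj]
    obtain ⟨y, hy⟩ := Fintype.exists_ne_of_one_lt_card (by simpa using (show 1 < n by omega)) x
    obtain ⟨w⟩ := hconn.preconnected x y
    cases w with
    | nil => exact absurd rfl hy.symm
    | cons h q => exact ⟨_, h⟩
  set s : Fin n → ℝ := fun x => Real.sqrt (G.degree x) with hsdef
  have hs : ∀ x, 0 < s x := fun x => Real.sqrt_pos.mpr (by exact_mod_cast hd x)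
  have hss : ∀ x, s x * s x = (G.degree x : ℝ) := fun x =>
    Real.mul_self_sqrt (by positivity)
  set g : Fin n → ℝ := fun x => f x / s x with hgdef
  have hfg : ∀ x, f x = s x * g x := fun x => by
    have hx := (hs x).ne'
    rw [hgdef]
    field_simp
  set dr : Fin n → ℝ := fun x => (G.degree x : ℝ) with hdr
  have hdr0 : ∀ x, 0 < dr x := fun x => by
    simp only [hdr]; exact_mod_cast hd x
  have horthog : ∑ x : Fin n, dr x * g x = 0 := by
    rw [← hortho]
    refine Finset.sum_congr rfl fun x _ => ?_
    rw [hfg x, ← mul_assoc, hss x]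
  set S := ∑ d : G.Dart, (g d.toProd.1 - g d.toProd.2)^2 with hS
  have hS0 : 0 ≤ S := Finset.sum_nonneg fun d _ => sq_nonneg _
  -- quadratic form equals S / 2
  have hP : ∑ x : Fin n, f x ^ 2 = ∑ d : G.Dart, g d.toProd.1 ^ 2 := by
    rw [dart_sum (fun x y => g x ^ 2)]
    refine Finset.sum_congr rfl fun x _ => ?_
    rw [row_sum x (g x ^ 2), hfg x, mul_pow, sq (s x), hss x]
  have hsym : ∑ d : G.Dart, g d.toProd.2 ^ 2 = ∑ d : G.Dart, g d.toProd.1 ^ 2 := by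
    have := symm_sum (G := G) (fun d => g d.toProd.2 ^ 2)
    simpa using this.symm
  have hA : f ⬝ᵥ (normLapG G *ᵥ f)
      = ∑ x : Fin n, f x ^ 2 - ∑ d : G.Dart, g d.toProd.1 * g d.toProd.2 := by
    rw [dart_sum (fun x y => g x * g y)]
    have step1 : f ⬝ᵥ (normLapG G *ᵥ f)
        = ∑ x : Fin n, ∑ y : Fin n,
            ((if x = y then f x * f y else 0) - (if G.Adj x y then g x * g y else 0)) := by
      simp only [dotProduct, Matrix.mulVec, normLapG, Matrix.of_apply, Finset.mul_sum]
      refine Finset.sum_congr rfl fun x _ => Finset.sum_congr rfl fun y _ => ?_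
      rcases eq_or_ne x y with rfl | hxy
      · simp [SimpleGraph.irrefl]
      · rw [if_neg hxy, if_neg hxy]
        by_cases hadj : G.Adj x y
        · rw [if_pos hadj, if_pos hadj]
          have h1 := (hs x).ne'
          have h2 := (hs y).ne'
          rw [hfg x, hfg y]
          field_simp
          have e1 : s x * (Real.sqrt (G.degree x))⁻¹ = 1 := mul_inv_cancel₀ h1
          have e2 : (Real.sqrt (G.degree y))⁻¹ * s y = 1 := inv_mul_cancel₀ h2
          linear_combination (-(g x * g y) * ((Real.sqrt (G.degree y))⁻¹ * s y)) * e1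
            + (-(g x * g y)) * e2
        · simp [hadj]
    rw [step1]
    simp only [Finset.sum_sub_distrib]
    congr 1
    refine Finset.sum_congr rfl fun x _ => ?_
    rw [Finset.sum_ite_eq]
    simp [sq]
  have hSsplit : S = 2 * ∑ d : G.Dart, g d.toProd.1 ^ 2
      - 2 * ∑ d : G.Dart, g d.toProd.1 * g d.toProd.2 := by
    rw [hS]
    have e1 : ∀ d : G.Dart, (g d.toProd.1 - g d.toProd.2)^2
        = g d.toProd.1^2 + g d.toProd.2^2 - 2*(g d.toProd.1*g d.toProd.2) := fun d => by ring
    rw [Finset.sum_congr rfl (fun d _ => e1 d), Finset.sum_sub_distrib,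
      Finset.sum_add_distrib, ← Finset.mul_sum, hsym]
    ring
  have hQS : f ⬝ᵥ (normLapG G *ᵥ f) = S / 2 := by
    rw [hA, hP, hSsplit]
    ring
  -- variance identity and bound
  set vol := ∑ x : Fin n, dr x with hvol
  set Pd := ∑ x : Fin n, dr x * g x ^ 2 with hPd
  have hPdf : ∑ x : Fin n, f x ^ 2 = Pd := by
    refine Finset.sum_congr rfl fun x _ => ?_
    rw [hfg x, mul_pow, sq (s x), hss x]
  have hvol_pos : 0 < vol := Finset.sum_pos (fun x _ => hdr0 x) ⟨⟨0, by omega⟩, Finset.mem_univ _⟩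
  have hvar : ∑ x : Fin n, ∑ y : Fin n, dr x * dr y * (g x - g y)^2 = 2 * vol * Pd := by
    have hrow : ∀ x : Fin n, ∑ y : Fin n, dr x * dr y * (g x - g y)^2
        = (dr x * g x ^ 2) * vol + dr x * Pd := by
      intro x
      have e1 : ∀ y : Fin n, dr x * dr y * (g x - g y)^2
          = (dr x * g x ^ 2) * dr y + dr x * (dr y * g y ^ 2)
            - (2 * (dr x * g x)) * (dr y * g y) := fun y => by ring
      rw [Finset.sum_congr rfl (fun y _ => e1 y), Finset.sum_sub_distrib,
        Finset.sum_add_distrib, ← Finset.mul_sum, ← Finset.mul_sum, ← Finset.mul_sum,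
        horthog, ← hvol, ← hPd]
      ring
    rw [Finset.sum_congr rfl (fun x _ => hrow x), Finset.sum_add_distrib,
      ← Finset.sum_mul, ← Finset.sum_mul, ← hvol, ← hPd]
    ring
  have hpb : ∀ x y : Fin n, (g x - g y)^2 ≤ (((n:ℝ)-1)/2) * S :=
    fun x y => path_bound hn hconn g x y
  have hvar_le : ∀ C : ℝ, (∀ x y : Fin n, (g x - g y)^2 ≤ C) →
      2 * vol * Pd ≤ vol * vol * C := by
    intro C hC
    rw [← hvar]
    calc ∑ x : Fin n, ∑ y : Fin n, dr x * dr y * (g x - g y)^2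
        ≤ ∑ x : Fin n, ∑ y : Fin n, dr x * dr y * C := by
          refine Finset.sum_le_sum fun x _ => Finset.sum_le_sum fun y _ => ?_
          exact mul_le_mul_of_nonneg_left (hC x y)
            (mul_nonneg (hdr0 x).le (hdr0 y).le)
      _ = vol * vol * C := by
          have h1 : ∀ x : Fin n, ∑ y : Fin n, dr x * dr y * C
              = dr x * ∑ y : Fin n, dr y * C := fun x => by
            rw [Finset.mul_sum]
            exact Finset.sum_congr rfl fun y _ => by ring
          rw [Finset.sum_congr rfl (fun x _ => h1 x), ← Finset.sum_mul, ← Finset.sum_mul,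
            ← hvol]
          ring
  have hPd_le : Pd ≤ vol * ((((n:ℝ)-1)/2) * S) / 2 := by
    have h := hvar_le _ hpb
    nlinarith [hvol_pos, h]
  -- degree bounds
  have hdeg_le : ∀ x, dr x ≤ (n:ℝ) - 1 := by
    intro x
    have := G.degree_lt_card_verts x
    rw [Fintype.card_fin] at this
    have : (G.degree x : ℝ) + 1 ≤ n := by exact_mod_cast this
    simp only [hdr]; linarith
  have hvol_le : vol ≤ (n:ℝ) * ((n:ℝ)-1) := by
    calc vol ≤ ∑ _x : Fin n, ((n:ℝ) - 1) := Finset.sum_le_sum fun x _ => hdeg_le x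
      _ = (n:ℝ) * ((n:ℝ)-1) := by
          rw [Finset.sum_const, Finset.card_univ, Fintype.card_fin, nsmul_eq_mul]
  have hn1 : (0:ℝ) < (n:ℝ) - 1 := by
    have : (2:ℝ) ≤ (n:ℝ) := by exact_mod_cast hn
    linarith
  have hnpos : (0:ℝ) < (n:ℝ) := by positivity
  have hden : (0:ℝ) < (n:ℝ) * ((n:ℝ)-1)^2 := by positivity
  rw [hQS, hPdf]
  have hPd_le2 : Pd ≤ (n:ℝ) * ((n:ℝ)-1)^2 * S / 4 := by
    have hstep : vol * ((((n:ℝ)-1)/2) * S) ≤ ((n:ℝ) * ((n:ℝ)-1)) * ((((n:ℝ)-1)/2) * S) := by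
      apply mul_le_mul_of_nonneg_right hvol_le
      positivity
    calc Pd ≤ vol * ((((n:ℝ)-1)/2) * S) / 2 := hPd_le
      _ ≤ ((n:ℝ) * ((n:ℝ)-1)) * ((((n:ℝ)-1)/2) * S) / 2 := by linarith
      _ = (n:ℝ) * ((n:ℝ)-1)^2 * S / 4 := by ring
  calc 2 / ((n:ℝ) * ((n:ℝ)-1)^2) * Pd
      ≤ 2 / ((n:ℝ) * ((n:ℝ)-1)^2) * ((n:ℝ) * ((n:ℝ)-1)^2 * S / 4) := by
        apply mul_le_mul_of_nonneg_left hPd_le2 (by positivity)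
    _ = S / 2 := by
        field_simp
        ring

end SGaux

/-- For every finite, unweighted, connected graph on `n` vertices,
`λ₂ ≥ 2 / (n (n-1)²)`. -/
theorem stmt5 {n : ℕ} (hn : 2 ≤ n) (G : SimpleGraph (Fin n)) [DecidableRel G.Adj]
    (hconn : G.Connected)
    (hL : (normLapG G).IsHermitian)
    (lam : Fin n → ℝ) (hmono : Monotone lam)
    (hperm : ∃ σ : Equiv.Perm (Fin n), lam = hL.eigenvalues ∘ σ) :
    2 / (n * ((n : ℝ) - 1) ^ 2) ≤ lam ⟨1, by omega⟩ := by
  classical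
  obtain ⟨σ, hσ⟩ := hperm
  set i0 : Fin n := σ ⟨0, by omega⟩ with hi0
  set i1 : Fin n := σ ⟨1, by omega⟩ with hi1
  have hne : i0 ≠ i1 := by
    intro h
    have := σ.injective h
    simp [Fin.ext_iff] at this
  set v : Fin n → Fin n → ℝ := fun j => (hL.eigenvectorBasis j : EuclideanSpace ℝ (Fin n)) with hv
  have horth : ∀ i j, ∑ x : Fin n, v i x * v j x = if i = j then 1 else 0 := by
    intro i j
    have h := (orthonormal_iff_ite (𝕜 := ℝ)).mp hL.eigenvectorBasis.orthonormal i j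
    rw [← h, PiLp.inner_apply]
    simp [RCLike.inner_apply, conj_trivial]
    exact Finset.sum_congr rfl fun x _ => mul_comm _ _
  set w : Fin n → ℝ := fun x => Real.sqrt (G.degree x) with hw
  set c0 : ℝ := ∑ x : Fin n, w x * v i0 x with hc0
  set c1 : ℝ := ∑ x : Fin n, w x * v i1 x with hc1
  obtain ⟨a, b, hab, habc⟩ : ∃ a b : ℝ, (a ≠ 0 ∨ b ≠ 0) ∧ a * c0 + b * c1 = 0 := by
    by_cases h0 : c0 = 0
    · exact ⟨1, 0, Or.inl one_ne_zero, by simp [h0]⟩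
    · exact ⟨c1, -c0, Or.inr (neg_ne_zero.mpr h0), by ring⟩
  set f : Fin n → ℝ := fun x => a * v i0 x + b * v i1 x with hf
  have hortho : ∑ x : Fin n, Real.sqrt (G.degree x) * f x = 0 := by
    calc ∑ x : Fin n, Real.sqrt (G.degree x) * f x
        = ∑ x : Fin n, (a * (w x * v i0 x) + b * (w x * v i1 x)) := by
          refine Finset.sum_congr rfl fun x _ => ?_
          simp only [hf, hw]
          ring
      _ = a * c0 + b * c1 := by
          rw [Finset.sum_add_distrib, ← Finset.mul_sum, ← Finset.mul_sum, ← hc0, ← hc1]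
      _ = 0 := habc
  have hsumsq : ∑ x : Fin n, f x ^ 2 = a^2 + b^2 := by
    have expand : ∀ x : Fin n, f x ^ 2
        = a^2 * (v i0 x * v i0 x) + b^2 * (v i1 x * v i1 x)
          + (2*a*b) * (v i0 x * v i1 x) := fun x => by simp only [hf]; ring
    rw [Finset.sum_congr rfl (fun x _ => expand x), Finset.sum_add_distrib,
      Finset.sum_add_distrib, ← Finset.mul_sum, ← Finset.mul_sum, ← Finset.mul_sum,
      horth i0 i0, horth i1 i1, horth i0 i1, if_pos rfl, if_pos rfl, if_neg hne]
    ring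
  have hmv : ∀ j : Fin n, ∀ x : Fin n,
      (normLapG G *ᵥ v j) x = hL.eigenvalues j * v j x := by
    intro j x
    have h := hL.mulVec_eigenvectorBasis j
    have := congrFun h x
    simpa [hv] using this
  have hmulf : ∀ x, (normLapG G *ᵥ f) x
      = a * (hL.eigenvalues i0 * v i0 x) + b * (hL.eigenvalues i1 * v i1 x) := by
    intro x
    have : (normLapG G *ᵥ f) x
        = a * ((normLapG G *ᵥ v i0) x) + b * ((normLapG G *ᵥ v i1) x) := by
      simp only [Matrix.mulVec, dotProduct, hf]
      rw [Finset.mul_sum, Finset.mul_sum, ← Finset.sum_add_distrib]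
      exact Finset.sum_congr rfl fun y _ => by ring
    rw [this, hmv i0 x, hmv i1 x]
  have hQ : f ⬝ᵥ (normLapG G *ᵥ f)
      = a^2 * hL.eigenvalues i0 + b^2 * hL.eigenvalues i1 := by
    rw [dotProduct]
    rw [Finset.sum_congr rfl (fun x _ => by rw [hmulf x])]
    have expand : ∀ x : Fin n,
        f x * (a * (hL.eigenvalues i0 * v i0 x) + b * (hL.eigenvalues i1 * v i1 x))
        = (a^2 * hL.eigenvalues i0) * (v i0 x * v i0 x)
          + (b^2 * hL.eigenvalues i1) * (v i1 x * v i1 x)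
          + (a * b * (hL.eigenvalues i0 + hL.eigenvalues i1)) * (v i0 x * v i1 x) := by
      intro x
      simp only [hf]
      ring
    rw [Finset.sum_congr rfl (fun x _ => expand x), Finset.sum_add_distrib,
      Finset.sum_add_distrib, ← Finset.mul_sum, ← Finset.mul_sum, ← Finset.mul_sum,
      horth i0 i0, horth i1 i1, horth i0 i1, if_pos rfl, if_pos rfl, if_neg hne]
    ring
  have hlam0 : lam ⟨0, by omega⟩ = hL.eigenvalues i0 := by rw [hσ]; rfl
  have hlam1 : lam ⟨1, by omega⟩ = hL.eigenvalues i1 := by rw [hσ]; rfl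
  have hle : lam ⟨0, by omega⟩ ≤ lam ⟨1, by omega⟩ := hmono (by simp [Fin.mk_le_mk])
  have hray := SGaux.rayleigh hn hconn f hortho
  rw [hsumsq, hQ] at hray
  have hpos : 0 < a^2 + b^2 := by
    rcases hab with h | h
    · positivity
    · positivity
  have hchain : 2 / ((n:ℝ) * ((n:ℝ)-1)^2) * (a^2 + b^2) ≤ lam ⟨1, by omega⟩ * (a^2 + b^2) := by
    calc 2 / ((n:ℝ) * ((n:ℝ)-1)^2) * (a^2 + b^2)
        ≤ a^2 * hL.eigenvalues i0 + b^2 * hL.eigenvalues i1 := hray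
      _ ≤ a^2 * hL.eigenvalues i1 + b^2 * hL.eigenvalues i1 := by
          have : hL.eigenvalues i0 ≤ hL.eigenvalues i1 := by
            rw [← hlam0, ← hlam1]; exact hle
          nlinarith [sq_nonneg a]
      _ = lam ⟨1, by omega⟩ * (a^2 + b^2) := by rw [hlam1]; ring
  exact le_of_mul_le_mul_right hchain hpos
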